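/- (The masked bit is hidden from any small model, with subsampled key.) Let α, n, r ∈ ℕ and η ≥ 0. Let samp: {0,1}^r → (size-n subsets of {1,…,α}) be a function such that for every distribution X on {0,1}^α with H_∞(X) ≥ α/4 there exists a distribution Y on {0,1}ⁿ with H_∞(Y) ≥ n/5 and SD((u, X|_{samp(u)}), (u, Y)) ≤ η, where u is uniform on {0,1}^r. Let s be uniformly distributed on {0,1}^α and let Z be any random variable jointly distributed with s whose support has size at most 2^{α/2}. Let u be uniform on {0,1}^r and v uniform on {0,1}ⁿ, with u and v independent of each other and of (s, Z). Then with probability at least 1 − 2^{−α/4} over z ← Z, the statistical distance between the conditional distribution of (u, v, ⟨v, s|_{samp(u)}⟩) given Z = z (inner product over 𝔽₂) and the distribution (u, v, U) with U a uniform independent bit is at most η + 2^{−n/10}. -/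

import Mathlib

open Finset

/-- Statistical distance between two (mass functions of) distributions on a finite set. -/
noncomputable def SD {Ω : Type*} [Fintype Ω] (p q : Ω → ℝ) : ℝ :=
  (∑ ω, |p ω - q ω|) / 2

/-- Min-entropy of a distribution on a finite set: `-log₂ (max_ω p ω)`. -/
noncomputable def minEntropy {Ω : Type*} [Fintype Ω] (p : Ω → ℝ) : ℝ :=
  - Real.logb 2 (⨆ ω, p ω)

/-- Marginal of the second component of a joint distribution. -/
noncomputable def margZ {A B : Type*} [Fintype A] (p : A × B → ℝ) : B → ℝ :=
  fun b => ∑ a, p (a, b)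

/-- Inner product over 𝔽₂. -/
def ip {N : ℕ} (x y : Fin N → ZMod 2) : ZMod 2 := ∑ i, x i * y i

/-- Restriction `x|_S` of a string `x ∈ {0,1}^N` to a subset `S` of size `t`, listing the
coordinates of `S` in increasing order. -/
def restrict {N t : ℕ} (x : Fin N → ZMod 2) (S : Finset (Fin N)) (h : S.card = t) :
    Fin t → ZMod 2 :=
  fun j => x ((S.orderIsoOfFin h j : Fin N))

/-! ### Auxiliary lemmas -/

noncomputable def χ (b : ZMod 2) : ℝ := if b = 0 then 1 else -1

lemma chi_add (a b : ZMod 2) : χ (a + b) = χ a * χ b := by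
  rcases (show a = 0 ∨ a = 1 by revert a; decide) with rfl | rfl <;> rcases (show b = 0 ∨ b = 1 by revert b; decide) with rfl | rfl <;>
    simp +decide [χ, show ((1:ZMod 2)+1) = 0 from rfl]

lemma chi_sum {ι : Type*} (s : Finset ι) (f : ι → ZMod 2) :
    χ (∑ i ∈ s, f i) = ∏ i ∈ s, χ (f i) := by
  induction s using Finset.cons_induction with
  | empty => simp [χ]
  | cons a s ha ih => rw [Finset.sum_cons, Finset.prod_cons, chi_add, ih]

lemma zmod2_sum (f : ZMod 2 → ℝ) : ∑ b : ZMod 2, f b = f 0 + f 1 := by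
  rw [show (Finset.univ : Finset (ZMod 2)) = {0, 1} from by decide]
  rw [Finset.sum_pair (by decide)]

lemma chi_b_sum (c : ZMod 2) : ∑ b : ZMod 2, χ (b * c) = if c = 0 then 2 else 0 := by
  rw [zmod2_sum]
  rcases (show c = 0 ∨ c = 1 by revert c; decide) with rfl | rfl <;> simp +decide [χ] <;> norm_num

lemma abs_chi (b : ZMod 2) : |χ b| = 1 := by
  rcases (show b = 0 ∨ b = 1 by revert b; decide) with rfl | rfl <;> simp +decide [χ]

lemma ind_eq (a b : ZMod 2) : (if a = b then (1:ℝ) else 0) = (1 + χ (a + b)) / 2 := by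
  rcases (show a = 0 ∨ a = 1 by revert a; decide) with rfl | rfl <;> rcases (show b = 0 ∨ b = 1 by revert b; decide) with rfl | rfl <;>
    simp +decide [χ, show ((1:ZMod 2)+1) = 0 from rfl] <;> norm_num

lemma ip_add_right {n : ℕ} (v y y' : Fin n → ZMod 2) :
    ip v (y + y') = ip v y + ip v y' := by
  unfold ip; simp [mul_add, Finset.sum_add_distrib]

lemma sum_chi {n : ℕ} (w : Fin n → ZMod 2) :
    ∑ v : Fin n → ZMod 2, χ (ip v w) = if w = 0 then (2:ℝ)^n else 0 := by
  have h1 : ∀ v : Fin n → ZMod 2, χ (ip v w) = ∏ i, χ (v i * w i) :=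
    fun v => chi_sum _ _
  simp_rw [h1]
  rw [← Fintype.piFinset_univ,
    ← Finset.prod_univ_sum (fun _ => Finset.univ) (fun i b => χ (b * w i))]
  simp_rw [chi_b_sum]
  by_cases hw : w = 0
  · simp [hw, Finset.prod_const]
  · rw [if_neg hw]
    obtain ⟨i, hi⟩ : ∃ i, w i ≠ 0 := by
      by_contra h; push_neg at h; exact hw (funext h)
    exact Finset.prod_eq_zero (Finset.mem_univ i) (by rw [if_neg hi])

lemma parseval {n : ℕ} (Y : (Fin n → ZMod 2) → ℝ) :
    ∑ v, (∑ y, Y y * χ (ip v y))^2 = 2^n * ∑ y, (Y y)^2 := by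
  have expand : ∀ v : Fin n → ZMod 2, (∑ y, Y y * χ (ip v y))^2
      = ∑ y, ∑ y', Y y * Y y' * χ (ip v (y + y')) := by
    intro v
    rw [sq, Finset.sum_mul_sum]
    refine Finset.sum_congr rfl fun y _ => Finset.sum_congr rfl fun y' _ => ?_
    rw [ip_add_right, chi_add]; ring
  simp_rw [expand]
  rw [Finset.sum_comm]
  have hneg : ∀ a : Fin n → ZMod 2, -a = a :=
    fun a => funext fun i => ZMod.neg_eq_self_mod_two (a i)
  have inner : ∀ y : Fin n → ZMod 2,
      (∑ v : Fin n → ZMod 2, ∑ y', Y y * Y y' * χ (ip v (y + y'))) = 2^n * Y y ^ 2 := by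
    intro y
    rw [Finset.sum_comm]
    have h2 : ∀ y' : Fin n → ZMod 2,
        (∑ v : Fin n → ZMod 2, Y y * Y y' * χ (ip v (y + y')))
          = Y y * Y y' * (if y + y' = 0 then (2:ℝ)^n else 0) := by
      intro y'
      rw [← Finset.mul_sum, sum_chi]
    simp_rw [h2]
    have h3 : ∀ y' : Fin n → ZMod 2, (y + y' = 0) ↔ (y = y') := by
      intro y'
      rw [add_eq_zero_iff_eq_neg, hneg]
    simp_rw [h3, mul_ite, mul_zero]
    rw [Finset.sum_ite_eq Finset.univ y (fun y' => Y y * Y y' * (2:ℝ)^n)]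
    simp [sq]; ring
  simp_rw [inner]
  rw [← Finset.mul_sum]

lemma exists_pos {Ω : Type*} [Fintype Ω] (f : Ω → ℝ) (h1 : ∑ x, f x = 1) :
    ∃ x, 0 < f x := by
  by_contra h
  push_neg at h
  have : ∑ x, f x ≤ 0 := Finset.sum_nonpos fun x _ => h x
  linarith

lemma minEntropy_ge {Ω : Type*} [Fintype Ω] (X : Ω → ℝ) (h1 : ∑ x, X x = 1)
    (c : ℝ) (hc : ∀ x, X x ≤ (2:ℝ) ^ (-c)) : c ≤ minEntropy X := by
  obtain ⟨x0, hx0⟩ := exists_pos X h1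
  have : Nonempty Ω := ⟨x0⟩
  have hsup_pos : 0 < ⨆ x, X x :=
    lt_of_lt_of_le hx0 (le_ciSup (Finite.bddAbove_range _) x0)
  have hsup_le : (⨆ x, X x) ≤ (2:ℝ)^(-c) := ciSup_le hc
  have h2 := (Real.logb_le_iff_le_rpow one_lt_two hsup_pos).mpr hsup_le
  unfold minEntropy
  linarith

lemma le_of_minEntropy {Ω : Type*} [Fintype Ω] (X : Ω → ℝ) (h1 : ∑ x, X x = 1)
    (c : ℝ) (hms : c ≤ minEntropy X) : ∀ x, X x ≤ (2:ℝ)^(-c) := by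
  intro x
  obtain ⟨x0, hx0⟩ := exists_pos X h1
  have : Nonempty Ω := ⟨x0⟩
  have hsup_pos : 0 < ⨆ x, X x :=
    lt_of_lt_of_le hx0 (le_ciSup (Finite.bddAbove_range _) x0)
  have h2 : Real.logb 2 (⨆ x, X x) ≤ -c := by
    unfold minEntropy at hms; linarith
  have h3 := (Real.logb_le_iff_le_rpow one_lt_two hsup_pos).mp h2
  exact le_trans (le_ciSup (Finite.bddAbove_range _) x) h3

/-- Leftover hash lemma for the inner-product one-bit extractor. -/
lemma lhl {n : ℕ} (Y : (Fin n → ZMod 2) → ℝ) (h0 : ∀ y, 0 ≤ Y y) (h1 : ∑ y, Y y = 1)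
    (M : ℝ) (hM0 : 0 ≤ M) (hM : ∀ y, Y y ≤ M) :
    ∑ v : Fin n → ZMod 2, ∑ b : ZMod 2,
      |(∑ y, Y y * (if ip v y = b then (1:ℝ) else 0)) - 1/2| ≤ 2^n * Real.sqrt M := by
  set W : (Fin n → ZMod 2) → ℝ := fun v => ∑ y, Y y * χ (ip v y) with hW
  have key : ∀ (v : Fin n → ZMod 2) (b : ZMod 2),
      (∑ y, Y y * (if ip v y = b then (1:ℝ) else 0)) - 1/2 = χ b * W v / 2 := by
    intro v b
    have e1 : (∑ y, Y y)/2 + χ b * W v/2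
        = ∑ y, (Y y * ((1 + χ (ip v y + b))/2)) := by
      rw [hW, Finset.sum_div, Finset.mul_sum, Finset.sum_div, ← Finset.sum_add_distrib]
      refine Finset.sum_congr rfl fun y _ => ?_
      rw [chi_add]; ring
    calc (∑ y, Y y * (if ip v y = b then (1:ℝ) else 0)) - 1/2
        = (∑ y, Y y * ((1 + χ (ip v y + b))/2)) - 1/2 := by
          simp_rw [ind_eq]
      _ = ((∑ y, Y y)/2 + χ b * W v/2) - 1/2 := by rw [e1]
      _ = χ b * W v / 2 := by rw [h1]; ring
  have step1 : ∀ v : Fin n → ZMod 2,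
      (∑ b : ZMod 2, |(∑ y, Y y * (if ip v y = b then (1:ℝ) else 0)) - 1/2|) = |W v| := by
    intro v
    simp_rw [key]
    rw [zmod2_sum]
    rw [abs_div, abs_div, abs_mul, abs_mul, abs_chi, abs_chi, abs_two]
    ring
  simp_rw [step1]
  have hY2 : ∑ y, (Y y)^2 ≤ M := by
    calc ∑ y, (Y y)^2 ≤ ∑ y, M * Y y := by
          refine Finset.sum_le_sum fun y _ => ?_
          rw [sq]
          exact mul_le_mul_of_nonneg_right (hM y) (h0 y)
      _ = M := by rw [← Finset.mul_sum, h1, mul_one]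
  have hcs : (∑ v, |W v|)^2 ≤ (2:ℝ)^n * ∑ v, (W v)^2 := by
    have h := sq_sum_le_card_mul_sum_sq (s := (Finset.univ : Finset (Fin n → ZMod 2)))
      (f := fun v => |W v|)
    simp_rw [sq_abs] at h
    have hcard : (((Finset.univ : Finset (Fin n → ZMod 2)).card : ℕ) : ℝ) = (2:ℝ)^n := by
      rw [Finset.card_univ, Fintype.card_fun]
      simp
    rw [hcard] at h
    exact h
  have hW2 : ∑ v, (W v)^2 ≤ (2:ℝ)^n * M := by
    calc ∑ v, (W v)^2 = 2^n * ∑ y, (Y y)^2 := parseval Y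
      _ ≤ (2:ℝ)^n * M := mul_le_mul_of_nonneg_left hY2 (by positivity)
  have habs_nonneg : 0 ≤ ∑ v, |W v| := Finset.sum_nonneg fun v _ => abs_nonneg _
  have hsq : (∑ v, |W v|)^2 ≤ ((2:ℝ)^n * Real.sqrt M)^2 := by
    calc (∑ v, |W v|)^2 ≤ (2:ℝ)^n * ∑ v, (W v)^2 := hcs
      _ ≤ (2:ℝ)^n * ((2:ℝ)^n * M) := mul_le_mul_of_nonneg_left hW2 (by positivity)
      _ = ((2:ℝ)^n * Real.sqrt M)^2 := by
          rw [mul_pow, Real.sq_sqrt hM0]; ring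
  calc ∑ v, |W v| = Real.sqrt ((∑ v, |W v|)^2) := (Real.sqrt_sq habs_nonneg).symm
    _ ≤ Real.sqrt (((2:ℝ)^n * Real.sqrt M)^2) := Real.sqrt_le_sqrt hsq
    _ = (2:ℝ)^n * Real.sqrt M := Real.sqrt_sq (by positivity)

lemma fiber_sum {A V : Type*} [Fintype A] [Fintype V] [DecidableEq V]
    (X : A → ℝ) (F : A → V) (g : V → ℝ) :
    ∑ a, X a * g (F a) = ∑ y, (∑ a, if F a = y then X a else 0) * g y := by
  symm
  simp_rw [Finset.sum_mul, ite_mul, zero_mul]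
  rw [Finset.sum_comm]
  refine Finset.sum_congr rfl fun a _ => ?_
  rw [Finset.sum_ite_eq Finset.univ (F a) (fun y => X a * g y)]
  simp

lemma SD_triangle {Ω : Type*} [Fintype Ω] (p q e : Ω → ℝ) : SD p q ≤ SD p e + SD e q := by
  unfold SD
  have h : ∑ ω, |p ω - q ω| ≤ ∑ ω, (|p ω - e ω| + |e ω - q ω|) :=
    Finset.sum_le_sum fun ω _ => abs_sub_le _ _ _
  rw [Finset.sum_add_distrib] at h
  linarith

/-- Data-processing step: appending `(v, ⟨v,y⟩)` does not increase statistical distance. -/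
lemma step_dp {r n : ℕ} {A : Type*} [Fintype A]
    (X : A → ℝ) (Y : (Fin n → ZMod 2) → ℝ)
    (F : (Fin r → ZMod 2) → A → (Fin n → ZMod 2)) :
    ∑ w : (Fin r → ZMod 2) × (Fin n → ZMod 2) × ZMod 2,
      |(1/2^r) * (1/2^n) * ∑ a, X a * (if ip w.2.1 (F w.1 a) = w.2.2 then (1:ℝ) else 0)
        - (1/2^r) * (1/2^n) * ∑ y, Y y * (if ip w.2.1 y = w.2.2 then (1:ℝ) else 0)|
      ≤ ∑ uy : (Fin r → ZMod 2) × (Fin n → ZMod 2),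
          |(1/2^r) * (∑ a, if F uy.1 a = uy.2 then X a else 0) - (1/2^r) * Y uy.2| := by
  have key : ∀ (u : Fin r → ZMod 2) (v : Fin n → ZMod 2) (b : ZMod 2),
      (1/2^r) * (1/2^n) * (∑ a, X a * (if ip v (F u a) = b then (1:ℝ) else 0))
        - (1/2^r) * (1/2^n) * (∑ y, Y y * (if ip v y = b then (1:ℝ) else 0))
      = ∑ y, (1/2^n : ℝ) * (((1/2^r) * (∑ a, if F u a = y then X a else 0) - (1/2^r) * Y y)
          * (if ip v y = b then (1:ℝ) else 0)) := by
    intro u v b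
    rw [fiber_sum X (F u) (fun y => if ip v y = b then (1:ℝ) else 0)]
    rw [← mul_sub, ← Finset.sum_sub_distrib, Finset.mul_sum]
    refine Finset.sum_congr rfl fun y _ => ?_
    ring
  simp only [Fintype.sum_prod_type]
  refine Finset.sum_le_sum fun u _ => ?_
  have hb : ∀ (v : Fin n → ZMod 2) (b : ZMod 2),
      |(1/2^r) * (1/2^n) * (∑ a, X a * (if ip v (F u a) = b then (1:ℝ) else 0))
        - (1/2^r) * (1/2^n) * (∑ y, Y y * (if ip v y = b then (1:ℝ) else 0))|
      ≤ ∑ y, (1/2^n : ℝ) * (|(1/2^r) * (∑ a, if F u a = y then X a else 0) - (1/2^r) * Y y|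
          * (if ip v y = b then (1:ℝ) else 0)) := by
    intro v b
    rw [key u v b]
    refine le_trans (Finset.abs_sum_le_sum_abs _ _) ?_
    refine le_of_eq (Finset.sum_congr rfl fun y _ => ?_)
    rw [abs_mul, abs_mul, abs_of_nonneg (by positivity : (0:ℝ) ≤ 1/2^n),
      abs_of_nonneg (by positivity : (0:ℝ) ≤ (if ip v y = b then (1:ℝ) else 0))]
  calc ∑ v, ∑ b, |(1/2^r) * (1/2^n) * (∑ a, X a * (if ip v (F u a) = b then (1:ℝ) else 0))
          - (1/2^r) * (1/2^n) * (∑ y, Y y * (if ip v y = b then (1:ℝ) else 0))|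
      ≤ ∑ v, ∑ b : ZMod 2, ∑ y,
          (1/2^n : ℝ) * (|(1/2^r) * (∑ a, if F u a = y then X a else 0) - (1/2^r) * Y y|
            * (if ip v y = b then (1:ℝ) else 0)) :=
        Finset.sum_le_sum fun v _ => Finset.sum_le_sum fun b _ => hb v b
    _ = ∑ v, ∑ y, ∑ b : ZMod 2,
          (1/2^n : ℝ) * (|(1/2^r) * (∑ a, if F u a = y then X a else 0) - (1/2^r) * Y y|
            * (if ip v y = b then (1:ℝ) else 0)) :=
        Finset.sum_congr rfl fun v _ => Finset.sum_comm
    _ = ∑ y, ∑ v, ∑ b : ZMod 2,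
          (1/2^n : ℝ) * (|(1/2^r) * (∑ a, if F u a = y then X a else 0) - (1/2^r) * Y y|
            * (if ip v y = b then (1:ℝ) else 0)) := Finset.sum_comm
    _ = ∑ y, |(1/2^r) * (∑ a, if F u a = y then X a else 0) - (1/2^r) * Y y| := by
        refine Finset.sum_congr rfl fun y _ => ?_
        have hbsum : ∀ v : Fin n → ZMod 2,
            ∑ b : ZMod 2, (1/2^n : ℝ) *
              (|(1/2^r) * (∑ a, if F u a = y then X a else 0) - (1/2^r) * Y y|
                * (if ip v y = b then (1:ℝ) else 0))
            = (1/2^n : ℝ) * |(1/2^r) * (∑ a, if F u a = y then X a else 0) - (1/2^r) * Y y| := by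
          intro v
          rw [← Finset.mul_sum, ← Finset.mul_sum,
            Finset.sum_ite_eq Finset.univ (ip v y) (fun _ => (1:ℝ))]
          simp
        simp_rw [hbsum]
        rw [Finset.sum_const, Finset.card_univ, Fintype.card_fun, ZMod.card, Fintype.card_fin,
          nsmul_eq_mul]
        push_cast
        field_simp

/-- The extractor output is close to uniform. -/
lemma step_unif {r n : ℕ} (Y : (Fin n → ZMod 2) → ℝ) (h0 : ∀ y, 0 ≤ Y y) (h1 : ∑ y, Y y = 1)
    (M : ℝ) (hM0 : 0 ≤ M) (hM : ∀ y, Y y ≤ M) :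
    ∑ w : (Fin r → ZMod 2) × (Fin n → ZMod 2) × ZMod 2,
      |(1/2^r) * (1/2^n) * (∑ y, Y y * (if ip w.2.1 y = w.2.2 then (1:ℝ) else 0))
        - (1/2^r) * (1/2^n) * (1/2)| ≤ Real.sqrt M := by
  simp only [Fintype.sum_prod_type]
  have hterm : ∀ (v : Fin n → ZMod 2) (b : ZMod 2),
      |(1/2^r : ℝ) * (1/2^n) * (∑ y, Y y * (if ip v y = b then (1:ℝ) else 0))
        - (1/2^r) * (1/2^n) * (1/2)|
      = (1/2^r : ℝ) * (1/2^n) * |(∑ y, Y y * (if ip v y = b then (1:ℝ) else 0)) - 1/2| := by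
    intro v b
    rw [← mul_sub, abs_mul, abs_of_nonneg (by positivity : (0:ℝ) ≤ (1/2^r : ℝ)*(1/2^n))]
  simp_rw [hterm, ← Finset.mul_sum, Finset.sum_const, Finset.card_univ, Fintype.card_fun,
    ZMod.card, Fintype.card_fin, nsmul_eq_mul]
  push_cast
  have hT := lhl Y h0 h1 M hM0 hM
  have h2r : (0:ℝ) < 2^r := by positivity
  have h2n : (0:ℝ) < 2^n := by positivity
  calc (1:ℝ)/2^r * (1/2^n) * ((2:ℝ)^r *
        ∑ v, ∑ b : ZMod 2, |(∑ y, Y y * (if ip v y = b then (1:ℝ) else 0)) - 1/2|)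
      = (1/2^n) * ∑ v, ∑ b : ZMod 2,
          |(∑ y, Y y * (if ip v y = b then (1:ℝ) else 0)) - 1/2| := by
        field_simp
        ring
    _ ≤ (1/2^n) * ((2:ℝ)^n * Real.sqrt M) := by
        exact mul_le_mul_of_nonneg_left hT (by positivity)
    _ = Real.sqrt M := by
        field_simp

/-- **The masked bit is hidden from any small model, with subsampled key.**
`s` is a uniform `α`-bit key; the model `Z` (arbitrary, jointly distributed with `s`) has
support of size at most `2^(α/2)`; `u` and `v` are fresh uniform strings.  Under the
stated sampler property of `samp`, with probability at least `1 - 2^(-α/4)` over `z ← Z`,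
the conditional distribution of `(u, v, ⟨v, s|_{samp(u)}⟩)` given `Z = z` is
`(η + 2^(-n/10))`-close to `(u, v, U)` with `U` a uniform independent bit. -/
theorem masked_bit_hidden
    (α n r : ℕ) (η : ℝ) (hη : 0 ≤ η)
    (samp : (Fin r → ZMod 2) → {S : Finset (Fin α) // S.card = n})
    (hsamp : ∀ X : (Fin α → ZMod 2) → ℝ, (∀ x, 0 ≤ X x) → (∑ x, X x = 1) →
      (α : ℝ) / 4 ≤ minEntropy X →
      ∃ Y : (Fin n → ZMod 2) → ℝ, (∀ y, 0 ≤ Y y) ∧ (∑ y, Y y = 1) ∧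
        (n : ℝ) / 5 ≤ minEntropy Y ∧
        SD (fun uy : (Fin r → ZMod 2) × (Fin n → ZMod 2) =>
              (1 / 2 ^ r) *
                ∑ x, if restrict x (samp uy.1).1 (samp uy.1).2 = uy.2 then X x else 0)
          (fun uy => (1 / 2 ^ r) * Y uy.2) ≤ η)
    (B : Type*) [Fintype B]
    (p : (Fin α → ZMod 2) × B → ℝ)
    (hp0 : ∀ w, 0 ≤ p w) (hp1 : ∑ w, p w = 1)
    (hsunif : ∀ s0 : Fin α → ZMod 2, ∑ b, p (s0, b) = 1 / 2 ^ α)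
    (hsupp : (((Finset.univ : Finset B).filter (fun b => margZ p b ≠ 0)).card : ℝ) ≤
      (2 : ℝ) ^ ((α : ℝ) / 2)) :
    1 - (2 : ℝ) ^ (-(α : ℝ) / 4) ≤
      ∑ z ∈ (Finset.univ : Finset B).filter (fun z =>
          SD (fun uvb : (Fin r → ZMod 2) × (Fin n → ZMod 2) × ZMod 2 =>
                (1 / 2 ^ r) * (1 / 2 ^ n) *
                  ∑ s0 : Fin α → ZMod 2,
                    (p (s0, z) / margZ p z) *
                      (if ip uvb.2.1 (restrict s0 (samp uvb.1).1 (samp uvb.1).2) = uvb.2.2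
                        then 1 else 0))
              (fun _ => (1 / 2 ^ r) * (1 / 2 ^ n) * (1 / 2)) ≤
            η + (2 : ℝ) ^ (-(n : ℝ) / 10)),
        margZ p z := by
  classical
  have hmarg0 : ∀ z, 0 ≤ margZ p z := fun z => Finset.sum_nonneg fun a _ => hp0 _
  have htot : ∑ z : B, margZ p z = 1 := by
    rw [← hp1, Fintype.sum_prod_type]
    simp only [margZ]
    exact Finset.sum_comm
  set T : ℝ := (2:ℝ)^(-(3*(α:ℝ)/4)) with hTdef
  have hTpos : 0 < T := Real.rpow_pos_of_pos two_pos _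
  -- mass of the good set
  have hsplit := Finset.sum_filter_add_sum_filter_not Finset.univ
    (fun z => T ≤ margZ p z) (margZ p)
  have hbad : ∑ z ∈ Finset.univ.filter (fun z => ¬ T ≤ margZ p z), margZ p z
      ≤ (2:ℝ)^(-(α:ℝ)/4) := by
    set bad := Finset.univ.filter (fun z => ¬ T ≤ margZ p z) with hbaddef
    rw [← Finset.sum_filter_ne_zero bad (f := margZ p)]
    have hsubset : bad.filter (fun z => margZ p z ≠ 0)
        ⊆ Finset.univ.filter (fun b => margZ p b ≠ 0) := by
      intro z hz
      rw [Finset.mem_filter] at hz ⊢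
      exact ⟨Finset.mem_univ z, hz.2⟩
    have hcard : ((bad.filter (fun z => margZ p z ≠ 0)).card : ℝ) ≤ (2:ℝ)^((α:ℝ)/2) :=
      le_trans (by exact_mod_cast Nat.cast_le.mpr (Finset.card_le_card hsubset)) hsupp
    calc ∑ z ∈ bad.filter (fun z => margZ p z ≠ 0), margZ p z
        ≤ (bad.filter (fun z => margZ p z ≠ 0)).card • T := by
          apply Finset.sum_le_card_nsmul
          intro z hz
          rw [Finset.mem_filter, hbaddef, Finset.mem_filter] at hz
          exact (not_le.mp hz.1.2).le
      _ = ((bad.filter (fun z => margZ p z ≠ 0)).card : ℝ) * T := nsmul_eq_mul _ _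
      _ ≤ (2:ℝ)^((α:ℝ)/2) * T := mul_le_mul_of_nonneg_right hcard hTpos.le
      _ = (2:ℝ)^(-(α:ℝ)/4) := by
          rw [hTdef, ← Real.rpow_add two_pos]
          congr 1; ring
  have hGmass : 1 - (2:ℝ)^(-(α:ℝ)/4)
      ≤ ∑ z ∈ Finset.univ.filter (fun z => T ≤ margZ p z), margZ p z := by
    linarith [hsplit, htot, hbad]
  refine le_trans hGmass (Finset.sum_le_sum_of_subset_of_nonneg ?_ (fun z _ _ => hmarg0 z))
  intro z hz
  rw [Finset.mem_filter] at hz ⊢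
  refine ⟨Finset.mem_univ z, ?_⟩
  have hmz : T ≤ margZ p z := hz.2
  have hm_pos : 0 < margZ p z := lt_of_lt_of_le hTpos hmz
  -- the conditional distribution of the key given Z = z
  have hX0 : ∀ s0 : Fin α → ZMod 2, 0 ≤ p (s0, z) / margZ p z :=
    fun s0 => div_nonneg (hp0 _) hm_pos.le
  have hX1 : ∑ s0 : Fin α → ZMod 2, p (s0, z) / margZ p z = 1 := by
    rw [← Finset.sum_div]
    exact div_self hm_pos.ne'
  have hXb : ∀ s0 : Fin α → ZMod 2, p (s0, z) / margZ p z ≤ (2:ℝ)^(-((α:ℝ)/4)) := by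
    intro s0
    have hnum : p (s0, z) ≤ (1:ℝ)/2^α := by
      rw [← hsunif s0]
      exact Finset.single_le_sum (fun b _ => hp0 _) (Finset.mem_univ z)
    have h1d : ((1:ℝ)/2^α) = (2:ℝ)^(-(α:ℝ)) := by
      rw [Real.rpow_neg (by norm_num : (0:ℝ) ≤ 2), Real.rpow_natCast, one_div]
    calc p (s0, z) / margZ p z ≤ ((1:ℝ)/2^α) / T :=
          div_le_div₀ (by positivity) hnum hTpos hmz
      _ = (2:ℝ)^(-((α:ℝ)/4)) := by
          rw [h1d, hTdef, ← Real.rpow_sub two_pos]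
          congr 1; ring
  have hXent : (α:ℝ)/4 ≤ minEntropy (fun s0 : Fin α → ZMod 2 => p (s0, z) / margZ p z) :=
    minEntropy_ge _ hX1 _ hXb
  obtain ⟨Y, hY0, hY1, hYent, hYSD⟩ :=
    hsamp (fun s0 => p (s0, z) / margZ p z) hX0 hX1 hXent
  have hYb : ∀ y, Y y ≤ (2:ℝ)^(-((n:ℝ)/5)) := le_of_minEntropy Y hY1 _ hYent
  set M : ℝ := (2:ℝ)^(-((n:ℝ)/5)) with hMdef
  have hM0 : 0 ≤ M := (Real.rpow_pos_of_pos two_pos _).le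
  have hsqrtM : Real.sqrt M = (2:ℝ)^(-(n:ℝ)/10) := by
    rw [hMdef, show ((2:ℝ)^(-((n:ℝ)/5))) = ((2:ℝ)^(-(n:ℝ)/10))^2 by
      rw [← Real.rpow_natCast ((2:ℝ)^(-(n:ℝ)/10)) 2, ← Real.rpow_mul (by norm_num : (0:ℝ) ≤ 2)]
      congr 1; push_cast; ring]
    exact Real.sqrt_sq (Real.rpow_pos_of_pos two_pos _).le
  -- the intermediate distribution
  set E : (Fin r → ZMod 2) × (Fin n → ZMod 2) × ZMod 2 → ℝ :=
    fun w => (1/2^r) * (1/2^n) * (∑ y, Y y * (if ip w.2.1 y = w.2.2 then (1:ℝ) else 0))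
    with hEdef
  have hDE : SD (fun uvb : (Fin r → ZMod 2) × (Fin n → ZMod 2) × ZMod 2 =>
        (1 / 2 ^ r) * (1 / 2 ^ n) *
          ∑ s0 : Fin α → ZMod 2,
            (p (s0, z) / margZ p z) *
              (if ip uvb.2.1 (restrict s0 (samp uvb.1).1 (samp uvb.1).2) = uvb.2.2
                then 1 else 0)) E ≤ η := by
    refine le_trans ?_ hYSD
    unfold SD
    have h := step_dp (fun s0 : Fin α → ZMod 2 => p (s0, z) / margZ p z) Y
      (fun u a => restrict a (samp u).1 (samp u).2)
    simp only [hEdef]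
    beta_reduce
    beta_reduce at h
    linarith [h]
  have hEU : SD E (fun _ : (Fin r → ZMod 2) × (Fin n → ZMod 2) × ZMod 2 =>
      (1 / 2 ^ r) * (1 / 2 ^ n) * (1 / 2)) ≤ Real.sqrt M / 2 := by
    unfold SD
    have h := step_unif (r := r) Y hY0 hY1 M hM0 hYb
    simp only [hEdef]
    beta_reduce
    beta_reduce at h
    linarith [h]
  have h10 : (0:ℝ) ≤ (2:ℝ)^(-(n:ℝ)/10) := (Real.rpow_pos_of_pos two_pos _).le
  refine le_trans (SD_triangle _ _ E) ?_
  refine le_trans (add_le_add hDE hEU) ?_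
  rw [hsqrtM]
  linarith
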